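/- Fix Np ≥ 1 and let Π_S : ℝ^{4·Np} → ℝ^{4·Np} and L_S : ℝ^{4·Np} → ℝ^{Np} be as follows: indexing ℝ^{4·Np} by pairs (ℓ, j), ℓ ∈ Fin Np, j ∈ Fin 4, with switch positions u(ℓ) ∈ ℝ³ at j ∈ {0,1,2} and slack s(ℓ) at j = 3, Π_S sends U to the vector with components u(ℓ)_j − u(ℓ−1)_j at (ℓ, j), j ∈ {0,1,2} (with u(−1) := 0), and 0 at (ℓ, 3); L_S extracts the slack components. Let Q̄ be any positive semidefinite real 2Np × 2Np matrix, Υ any real 2Np × 4Np matrix, and λ_sw, λ_u > 0. Then the Hessian H_S = Υ^⊤ Q̄ Υ + λ_sw · L_S^⊤ L_S + λ_u · Π_S^⊤ Π_S is positive definite. -/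

import Mathlib

open Matrix

/-- The matrix of the map `Π_S`: rows indexed by `(ℓ, j)` with `j ∈ {0,1,2}` produce
`u(ℓ)_j - u(ℓ-1)_j` (with `u(-1) := 0`), and rows with `j = 3` are zero. -/
def PiSmat (Np : ℕ) : Matrix (Fin Np × Fin 4) (Fin Np × Fin 4) ℝ :=
  Matrix.of fun q r =>
    if (q.2 : ℕ) < 3 then
      (if q = r then (1 : ℝ) else 0) +
        (if (r.1 : ℕ) + 1 = (q.1 : ℕ) ∧ r.2 = q.2 then -1 else 0)
    else 0

/-- The matrix of the map `L_S` extracting the slack components (`j = 3`). -/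
def LSmat (Np : ℕ) : Matrix (Fin Np) (Fin Np × Fin 4) ℝ :=
  Matrix.of fun ℓ q => if q.1 = ℓ ∧ (q.2 : ℕ) = 3 then (1 : ℝ) else 0

/-- Any vector in the joint kernel of `L_S` and `Π_S` is zero. -/
lemma kernel_zero (Np : ℕ) (x : Fin Np × Fin 4 → ℝ)
    (hL : LSmat Np *ᵥ x = 0) (hP : PiSmat Np *ᵥ x = 0) : x = 0 := by
  have hL' : ∀ ℓ : Fin Np, x (ℓ, 3) = 0 := by
    intro ℓ
    have h := congrFun hL ℓ
    simpa [LSmat, mulVec, dotProduct, Fintype.sum_prod_type, Fin.sum_univ_four,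
      Finset.sum_ite_eq', show ((3:Fin 4):ℕ) = 3 from rfl] using h
  have hrow : ∀ (ℓ : Fin Np) (j : Fin 4), (j : ℕ) < 3 →
      x (ℓ, j) + ∑ r : Fin Np × Fin 4,
        (if (r.1 : ℕ) + 1 = (ℓ : ℕ) ∧ r.2 = j then (-1 : ℝ) * x r else 0) = 0 := by
    intro ℓ j hj
    have h := congrFun hP (ℓ, j)
    simpa only [PiSmat, mulVec, dotProduct, Matrix.of_apply, hj, if_true, add_mul,
      Finset.sum_add_distrib, ite_mul, one_mul, zero_mul, Finset.sum_ite_eq,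
      Finset.mem_univ, Pi.zero_apply] using h
  have key : ∀ n (hn : n < Np) (j : Fin 4), x (⟨n, hn⟩, j) = 0 := by
    intro n
    induction n with
    | zero =>
      intro hn j
      rcases Nat.lt_or_ge (j : ℕ) 3 with hj | hj
      · have h := hrow ⟨0, hn⟩ j hj
        have hsum : ∑ r : Fin Np × Fin 4,
            (if (r.1 : ℕ) + 1 = ((⟨0, hn⟩ : Fin Np) : ℕ) ∧ r.2 = j then (-1 : ℝ) * x r else 0) = 0 := by
          apply Finset.sum_eq_zero
          intro r _; simp
        rw [hsum] at h
        simpa using h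
      · have hj3 : j = 3 := by ext; have := j.isLt; omega
        subst hj3; exact hL' _
    | succ m IH =>
      intro hn j
      rcases Nat.lt_or_ge (j : ℕ) 3 with hj | hj
      · have h := hrow ⟨m + 1, hn⟩ j hj
        have hm : m < Np := Nat.lt_of_succ_lt hn
        have hsum : ∑ r : Fin Np × Fin 4,
            (if (r.1 : ℕ) + 1 = ((⟨m+1, hn⟩ : Fin Np) : ℕ) ∧ r.2 = j then (-1 : ℝ) * x r else 0)
            = - x (⟨m, hm⟩, j) := by
          rw [Finset.sum_eq_single ((⟨m, hm⟩ : Fin Np), j)]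
          · simp
          · intro r _ hr
            rw [if_neg]
            rintro ⟨h1, h2⟩
            apply hr
            have : r.1 = (⟨m, hm⟩ : Fin Np) := by ext; simpa using h1
            exact Prod.ext this h2
          · intro h; exact absurd (Finset.mem_univ _) h
        rw [hsum, IH hm j, neg_zero] at h
        simpa using h
      · have hj3 : j = 3 := by ext; have := j.isLt; omega
        subst hj3; exact hL' _
  funext q
  obtain ⟨⟨n, hn⟩, j⟩ := q
  exact key n hn j

/-- Quadratic form of `Aᵀ A` is the squared norm of `A *ᵥ x`. -/
lemma quadform_tmul {n : Type*} [Fintype n] [DecidableEq n] {m : Type*} [Fintype m]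
    (A : Matrix m n ℝ) (x : n → ℝ) :
    x ⬝ᵥ ((Aᵀ * A) *ᵥ x) = (A *ᵥ x) ⬝ᵥ (A *ᵥ x) := by
  rw [← mulVec_mulVec, dotProduct_mulVec, vecMul_transpose]

/-- The Hessian `H_S = Υᵀ Q̄ Υ + λ_sw L_Sᵀ L_S + λ_u Π_Sᵀ Π_S` of the
switching-frequency limiting controller is positive definite whenever `Q̄ ⪰ 0`,
`λ_sw > 0` and `λ_u > 0`. -/
theorem hessian_S_posDef
    (Np : ℕ) (hNp : 1 ≤ Np)
    (Qbar : Matrix (Fin Np × Fin 2) (Fin Np × Fin 2) ℝ) (hQbar : Qbar.PosSemidef)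
    (Υ : Matrix (Fin Np × Fin 2) (Fin Np × Fin 4) ℝ)
    (lsw lu : ℝ) (hlsw : 0 < lsw) (hlu : 0 < lu) :
    (Υᵀ * Qbar * Υ + lsw • ((LSmat Np)ᵀ * LSmat Np) +
      lu • ((PiSmat Np)ᵀ * PiSmat Np)).PosDef := by
  set L := LSmat Np
  set P := PiSmat Np
  have h1 : (Υᵀ * Qbar * Υ).PosSemidef := by
    simpa using hQbar.conjTranspose_mul_mul_same Υ
  rw [posDef_iff_dotProduct_mulVec]
  constructor
  · have hLh : (lsw • (Lᵀ * L)).IsHermitian := by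
      simp [Matrix.IsHermitian, conjTranspose_smul, (isHermitian_conjTranspose_mul_self L).eq]
    have hPh : (lu • (Pᵀ * P)).IsHermitian := by
      simp [Matrix.IsHermitian, conjTranspose_smul, (isHermitian_conjTranspose_mul_self P).eq]
    exact (h1.isHermitian.add hLh).add hPh
  · intro x hx
    simp only [star_trivial, add_mulVec, dotProduct_add, smul_mulVec, dotProduct_smul,
      smul_eq_mul]
    have hA : 0 ≤ x ⬝ᵥ ((Υᵀ * Qbar * Υ) *ᵥ x) := by simpa using h1.dotProduct_mulVec_nonneg x
    have hLnn : 0 ≤ (L *ᵥ x) ⬝ᵥ (L *ᵥ x) := by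
      have := dotProduct_star_self_nonneg (L *ᵥ x); rwa [star_trivial] at this
    have hPnn : 0 ≤ (P *ᵥ x) ⬝ᵥ (P *ᵥ x) := by
      have := dotProduct_star_self_nonneg (P *ᵥ x); rwa [star_trivial] at this
    rw [quadform_tmul L x, quadform_tmul P x]
    have hpos : 0 < (L *ᵥ x) ⬝ᵥ (L *ᵥ x) ∨ 0 < (P *ᵥ x) ⬝ᵥ (P *ᵥ x) := by
      by_contra hc
      push_neg at hc
      have hL0 : L *ᵥ x = 0 :=
        (dotProduct_self_eq_zero).1 (le_antisymm hc.1 hLnn)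
      have hP0 : P *ᵥ x = 0 :=
        (dotProduct_self_eq_zero).1 (le_antisymm hc.2 hPnn)
      exact hx (kernel_zero Np x hL0 hP0)
    rcases hpos with h | h
    · have : 0 < lsw * ((L *ᵥ x) ⬝ᵥ (L *ᵥ x)) := mul_pos hlsw h
      nlinarith [mul_nonneg hlu.le hPnn]
    · have : 0 < lu * ((P *ᵥ x) ⬝ᵥ (P *ᵥ x)) := mul_pos hlu h
      nlinarith [mul_nonneg hlsw.le hLnn]
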